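/- The staircase function Φ defined on the strip V + Ω by Φ(z) = z + a if Π_Y(z) ∈ Ω^a, Φ(z) = z + a + b if Π_Y(z) ∈ Ω^{a+b}, and Φ(z) = z + b if Π_Y(z) ∈ Ω^b, where Ω^a = [y₀, y₀+|Ω|-Π_Y(a)), Ω^{a+b} = [y₀+|Ω|-Π_Y(a), y₀-Π_Y(b)), Ω^b = [y₀-Π_Y(b), y₀+|Ω|), is a bijection of the strip V + Ω onto itself. -/

import Mathlib

/-- Projection to the vertical axis `Y` along the line `V = {(x, αx)}`. -/
noncomputable def projY (α : ℝ) (p : Fin 2 → ℝ) : ℝ := p 1 - α * p 0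

/-- Real lift of an integer vector. -/
def lift (z : Fin 2 → ℤ) : Fin 2 → ℝ := fun i => (z i : ℝ)

/-- The staircase function on the strip: add `a`, `a+b`, or `b` according to the
subwindow of `[y₀, y₀ + L)` to which the point projects. -/
noncomputable def staircaseFn (α y₀ L : ℝ) (a b : Fin 2 → ℤ) (p : Fin 2 → ℝ) : Fin 2 → ℝ :=
  if projY α p < y₀ + L - projY α (lift a) then p + lift a
  else if projY α p < y₀ - projY α (lift b) then p + lift a + lift b
  else p + lift b

lemma projY_add (α : ℝ) (p q : Fin 2 → ℝ) :
    projY α (p + q) = projY α p + projY α q := by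
  simp [projY, Pi.add_apply]; ring

lemma projY_sub (α : ℝ) (p q : Fin 2 → ℝ) :
    projY α (p - q) = projY α p - projY α q := by
  simp [projY, Pi.sub_apply]; ring

/-- The staircase function `Φ` is a bijection of the strip `V + Ω` onto itself. -/
theorem staircase_function_bijective
    (α y₀ L : ℝ) (hα : Irrational α) (hL : 0 < L) (a b : Fin 2 → ℤ)
    (haY : 0 < projY α (lift a)) (hbY : projY α (lift b) < 0)
    (haL : projY α (lift a) ≤ L) (hbL : -projY α (lift b) ≤ L)
    (hab : L ≤ projY α (lift a) - projY α (lift b)) :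
    Set.BijOn (staircaseFn α y₀ L a b)
      {p : Fin 2 → ℝ | projY α p ∈ Set.Ico y₀ (y₀ + L)}
      {p : Fin 2 → ℝ | projY α p ∈ Set.Ico y₀ (y₀ + L)} := by
  set A := projY α (lift a) with hA
  set B := projY α (lift b) with hB
  set ψ : (Fin 2 → ℝ) → (Fin 2 → ℝ) := fun p =>
    if projY α p < y₀ + L + B then p - lift b
    else if projY α p < y₀ + A then p - lift a - lift b
    else p - lift a with hψ
  have hmf : Set.MapsTo (staircaseFn α y₀ L a b)
      {p : Fin 2 → ℝ | projY α p ∈ Set.Ico y₀ (y₀ + L)}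
      {p : Fin 2 → ℝ | projY α p ∈ Set.Ico y₀ (y₀ + L)} := by
    intro p hp
    obtain ⟨h1, h2⟩ := hp
    simp only [Set.mem_setOf_eq, Set.mem_Ico, staircaseFn]
    split_ifs with c1 c2 <;>
      simp only [projY_add, ← hA, ← hB] <;> (try push_neg at *) <;> constructor <;> linarith
  have hmg : Set.MapsTo ψ
      {p : Fin 2 → ℝ | projY α p ∈ Set.Ico y₀ (y₀ + L)}
      {p : Fin 2 → ℝ | projY α p ∈ Set.Ico y₀ (y₀ + L)} := by
    intro p hp
    obtain ⟨h1, h2⟩ := hp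
    simp only [Set.mem_setOf_eq, Set.mem_Ico, hψ]
    split_ifs with c1 c2 <;>
      simp only [projY_sub, ← hA, ← hB] <;> (try push_neg at *) <;> constructor <;> linarith
  have hleft : Set.LeftInvOn ψ (staircaseFn α y₀ L a b)
      {p : Fin 2 → ℝ | projY α p ∈ Set.Ico y₀ (y₀ + L)} := by
    intro p hp
    obtain ⟨h1, h2⟩ := hp
    simp only [staircaseFn, hψ]
    split_ifs <;>
      (try simp only [projY_add, projY_sub, ← hA, ← hB] at *) <;>
      first
        | (exfalso; linarith)
        | abel
  have hright : Set.RightInvOn ψ (staircaseFn α y₀ L a b)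
      {p : Fin 2 → ℝ | projY α p ∈ Set.Ico y₀ (y₀ + L)} := by
    intro p hp
    obtain ⟨h1, h2⟩ := hp
    simp only [staircaseFn, hψ]
    split_ifs <;>
      (try simp only [projY_add, projY_sub, ← hA, ← hB] at *) <;>
      first
        | (exfalso; linarith)
        | abel
  exact Set.InvOn.bijOn ⟨hleft, hright⟩ hmf hmg
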